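/- Let W = {w₁, …, w_m} ⊆ ℝ^n generate the cone K_W, let L = lineality(K_W) = K_W ∩ (−K_W), and let K_P = L^⊥ ∩ K_W. Let W_{∖L} = {w ∈ W : w ∉ L}. Then the cone generated by the orthogonal projections of the vectors of W_{∖L} onto L^⊥ equals K_P: cone(proj_{L^⊥}(W_{∖L})) = K_P. -/

import Mathlib

/-- The cone generated by a finite family of vectors `w₁, …, w_m` in Euclidean space:
the set of their nonnegative linear combinations. -/
def coneFam {n m : ℕ} (w : Fin m → EuclideanSpace ℝ (Fin n)) :
    Set (EuclideanSpace ℝ (Fin n)) :=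
  {x | ∃ l : Fin m → ℝ, 0 ≤ l ∧ x = ∑ i, l i • w i}

/-- Let `W = {w₁, …, w_m} ⊆ ℝ^n` generate the cone `K_W`, let
`L = lineality(K_W) = K_W ∩ (−K_W)`, and let `K_P = L^⊥ ∩ K_W`.  Letting `W_{∖L}` be the
vectors of `W` not lying in `L`, the cone generated by the orthogonal projections of the
vectors of `W_{∖L}` onto `L^⊥` equals `K_P`: `cone(proj_{L^⊥}(W_{∖L})) = K_P`. -/
theorem pointed_part_generated_by_projected_nonlineal_points {n m : ℕ}
    (w : Fin m → EuclideanSpace ℝ (Fin n))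
    (L : Submodule ℝ (EuclideanSpace ℝ (Fin n)))
    (hL : (L : Set (EuclideanSpace ℝ (Fin n))) = coneFam w ∩ (-(coneFam w))) :
    {x : EuclideanSpace ℝ (Fin n) | ∃ l : Fin m → ℝ, 0 ≤ l ∧ (∀ i, w i ∈ L → l i = 0) ∧
        x = ∑ i, l i • ((Submodule.orthogonalProjectionOnto Lᗮ (w i) : EuclideanSpace ℝ (Fin n)))} =
      (Lᗮ : Set (EuclideanSpace ℝ (Fin n))) ∩ coneFam w := by
  classical
  have hsplit : ∀ v : EuclideanSpace ℝ (Fin n),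
      v - (Submodule.orthogonalProjectionOnto Lᗮ v : EuclideanSpace ℝ (Fin n)) ∈ L := by
    intro v
    have h := L.starProjection_add_starProjection_orthogonal v
    have h2 : v - (Submodule.orthogonalProjectionOnto Lᗮ v : EuclideanSpace ℝ (Fin n)) =
        (Submodule.orthogonalProjectionOnto L v : EuclideanSpace ℝ (Fin n)) :=
      (eq_sub_of_add_eq h).symm
    rw [h2]; exact SetLike.coe_mem _
  have hzero : ∀ i, w i ∈ L →
      (Submodule.orthogonalProjectionOnto Lᗮ (w i) : EuclideanSpace ℝ (Fin n)) = 0 := by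
    intro i hi
    have : w i ∈ Lᗮᗮ := Submodule.le_orthogonal_orthogonal L hi
    rw [Submodule.orthogonalProjectionOnto_apply_of_mem_orthogonal this,
      Submodule.coe_zero]
  ext x
  constructor
  · rintro ⟨l, hl, hl0, rfl⟩
    refine ⟨Submodule.sum_mem _ fun i _ => Submodule.smul_mem _ _ (SetLike.coe_mem _), ?_⟩
    set z : EuclideanSpace ℝ (Fin n) :=
      ∑ i, l i • (w i - (Submodule.orthogonalProjectionOnto Lᗮ (w i) : EuclideanSpace ℝ (Fin n))) with hz
    have hzL : z ∈ L := Submodule.sum_mem _ fun i _ => Submodule.smul_mem _ _ (hsplit (w i))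
    have hnz : -z ∈ coneFam w := by
      have h2 : -z ∈ (L : Set (EuclideanSpace ℝ (Fin n))) := Submodule.neg_mem _ hzL
      rw [hL] at h2
      exact h2.1
    obtain ⟨μ, hμ, hzeq⟩ := hnz
    refine ⟨fun i => l i + μ i, fun i => add_nonneg (hl i) (hμ i), ?_⟩
    have key : ∑ i, l i • (Submodule.orthogonalProjectionOnto Lᗮ (w i) : EuclideanSpace ℝ (Fin n)) =
        (∑ i, l i • w i) - z := by
      rw [hz, ← Finset.sum_sub_distrib]
      exact Finset.sum_congr rfl fun i _ => by rw [smul_sub]; abel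
    rw [key, sub_eq_add_neg, hzeq, ← Finset.sum_add_distrib]
    exact Finset.sum_congr rfl fun i _ => (add_smul _ _ _).symm
  · rintro ⟨hx, l, hl, rfl⟩
    refine ⟨fun i => if w i ∈ L then 0 else l i, fun i => ?_, fun i hi => if_pos hi, ?_⟩
    · dsimp only
      split
      · exact le_refl 0
      · exact hl i
    have hPx : (Submodule.orthogonalProjectionOnto Lᗮ (∑ i, l i • w i) : EuclideanSpace ℝ (Fin n)) =
        ∑ i, l i • w i := Submodule.starProjection_eq_self_iff.mpr hx
    calc ∑ i, l i • w i
        = (Submodule.orthogonalProjectionOnto Lᗮ (∑ i, l i • w i) : EuclideanSpace ℝ (Fin n)) := hPx.symm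
      _ = ∑ i, l i • (Submodule.orthogonalProjectionOnto Lᗮ (w i) : EuclideanSpace ℝ (Fin n)) := by
          rw [map_sum, Submodule.coe_sum]
          exact Finset.sum_congr rfl fun i _ => by rw [map_smul]; rfl
      _ = ∑ i, (if w i ∈ L then 0 else l i) •
            (Submodule.orthogonalProjectionOnto Lᗮ (w i) : EuclideanSpace ℝ (Fin n)) := by
          refine Finset.sum_congr rfl fun i _ => ?_
          by_cases hi : w i ∈ L
          · rw [if_pos hi, hzero i hi, smul_zero, smul_zero]
          · rw [if_neg hi]
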